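/- There exist a finite alphabet A and a quasi-regular 3-variable language L over A such that the 2-variable language {(b, c) in (A*)^2 : for all a in A*, (a, b, c) in L} is not quasi-regular. In particular, universal quantification over a coordinate does not preserve quasi-regularity. -/

import Mathlib

/-- An `n`-tape semi-sorted (deterministic) asynchronous automaton over `A`:
a partial deterministic finite state automaton over `A ∪ {$}` (unique start state,
no `ε`-transitions, at most one transition from each state for each letter; the
padding symbol `$` is modelled by `none : Option A`), together with a partition of
its states into `n` sets (recorded by `tape`, where `tape s = i` means `s ∈ S_i`). -/
structure SemiSortedAA (A : Type) (n : ℕ) where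
  State : Type
  fintype : Fintype State
  start : State
  accept : Set State
  /-- partial deterministic transition function over the alphabet `A ∪ {$}` -/
  step : State → Option A → Option State
  /-- the index `i` such that the state lies in `S_i` -/
  tape : State → Fin n

namespace SemiSortedAA

variable {A : Type} {n : ℕ}

/-- `M.Run s r f` : starting in state `s` with remaining (still unread) content `r i`
on the `i`-th tape, the automaton can consume all the remaining content and end in
state `f`, where from a state `s` it reads the next letter of tape `M.tape s`.
This is exactly the existence of a shuffle of the tape contents labelling a path
from `s` to `f` in which every letter originating from the `i`-th tape is read
while the automaton is in a state of `S_i`. -/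
inductive Run (M : SemiSortedAA A n) :
    M.State → (Fin n → List (Option A)) → M.State → Prop
  | nil (s : M.State) : Run M s (fun _ => []) s
  | step {s t f : M.State} {c : Option A} {rest : List (Option A)}
      {r : Fin n → List (Option A)}
      (h : M.step s c = some t)
      (hr : r (M.tape s) = c :: rest)
      (hrun : Run M t (Function.update r (M.tape s) rest) f) :
      Run M s r f

/-- `M` accepts the tuple of words `(w 1, …, w n)` if some shuffle of
`(w 1 $, …, w n $)` labels a path from the start state to an accept state,
each letter from the `i`-th word (including its terminal `$`) being read in `S_i`. -/
def Accepts (M : SemiSortedAA A n) (w : Fin n → List A) : Prop :=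
  ∃ f ∈ M.accept, M.Run M.start (fun i => (w i).map some ++ [none]) f

end SemiSortedAA

/-- An `n`-variable language is quasi-regular if it is the language accepted by some
`n`-tape semi-sorted asynchronous automaton. -/
def IsQuasiRegular {A : Type} {n : ℕ} (L : Set (Fin n → List A)) : Prop :=
  ∃ M : SemiSortedAA A n, ∀ w, w ∈ L ↔ M.Accepts w

-- ====== machine ======
inductive St : Type
  | A0 | A1 | B0 | B1 (x : Bool) | Cx (x : Bool) | Dx (x : Bool) | E | F | CA | CC | ACC
deriving DecidableEq, Fintype

open St in
def Mach : SemiSortedAA Bool 3 where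
  State := St
  fintype := inferInstance
  start := A0
  accept := {ACC}
  step := fun s c => match s, c with
    | A0, some _ => some A1
    | A0, none => some B0
    | A1, some _ => some A0
    | A1, none => some CA
    | B0, some x => some (B1 x)
    | B0, none => some CC
    | B1 x, some _ => some (Cx x)
    | B1 x, none => some (Dx x)
    | Cx x, some _ => some (B1 x)
    | Cx _, none => some F
    | Dx x, some y => if y = x then some E else none
    | Dx _, none => some ACC
    | E, some _ => some E
    | E, none => some ACC
    | F, some _ => some F
    | F, none => some ACC
    | CA, some _ => some CA
    | CA, none => some CC
    | CC, some _ => some CC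
    | CC, none => some ACC
    | ACC, _ => none
  tape := fun s => match s with
    | A0 => 0 | CA => 0 | ACC => 0
    | A1 => 1 | B0 => 1 | B1 _ => 1 | F => 1
    | Cx _ => 2 | Dx _ => 2 | E => 2 | CC => 2

abbrev pad (l : List Bool) : List (Option Bool) := l.map some ++ [none]

lemma upd3_0 (a b c x : List (Option Bool)) :
    Function.update ![a,b,c] (0 : Fin 3) x = ![x,b,c] := by
  funext i; fin_cases i <;> simp [Function.update]
lemma upd3_1 (a b c x : List (Option Bool)) :
    Function.update ![a,b,c] (1 : Fin 3) x = ![a,x,c] := by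
  funext i; fin_cases i <;> simp [Function.update]
lemma upd3_2 (a b c x : List (Option Bool)) :
    Function.update ![a,b,c] (2 : Fin 3) x = ![a,b,x] := by
  funext i; fin_cases i <;> simp [Function.update]

lemma nil3 (s : St) : Mach.Run s ![[],[],[]] s := by
  have h := SemiSortedAA.Run.nil (M := Mach) s
  convert h using 1
  rw [show (![[],[],[]] : Fin 3 → List (Option Bool)) = fun _ => [] from by funext i; fin_cases i <;> rfl]

section stepLemmas
variable {s t f : St} {c : Option Bool} {a b cc rest : List (Option Bool)}

lemma step3_0 (ht : Mach.tape s = 0) (h : Mach.step s c = some t)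
    (hr : Mach.Run t ![rest, b, cc] f) : Mach.Run s ![c :: rest, b, cc] f := by
  refine SemiSortedAA.Run.step (c := c) (rest := rest) h ?_ ?_
  · rw [ht]; rfl
  · rw [ht, upd3_0]; exact hr

lemma step3_1 (ht : Mach.tape s = 1) (h : Mach.step s c = some t)
    (hr : Mach.Run t ![a, rest, cc] f) : Mach.Run s ![a, c :: rest, cc] f := by
  refine SemiSortedAA.Run.step (c := c) (rest := rest) h ?_ ?_
  · rw [ht]; rfl
  · rw [ht, upd3_1]; exact hr

lemma step3_2 (ht : Mach.tape s = 2) (h : Mach.step s c = some t)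
    (hr : Mach.Run t ![a, b, rest] f) : Mach.Run s ![a, b, c :: rest] f := by
  refine SemiSortedAA.Run.step (c := c) (rest := rest) h ?_ ?_
  · rw [ht]; rfl
  · rw [ht, upd3_2]; exact hr
end stepLemmas

lemma runE (l : List Bool) : Mach.Run .E ![[], [], pad l] .ACC := by
  induction l with
  | nil => exact step3_2 rfl rfl (nil3 _)
  | cons x l ih => exact step3_2 rfl rfl ih

lemma runCC (l : List Bool) : Mach.Run .CC ![[], [], pad l] .ACC := by
  induction l with
  | nil => exact step3_2 rfl rfl (nil3 _)
  | cons x l ih => exact step3_2 rfl rfl ih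

lemma runF (l : List Bool) : Mach.Run .F ![[], pad l, []] .ACC := by
  induction l with
  | nil => exact step3_1 rfl rfl (nil3 _)
  | cons x l ih => exact step3_1 rfl rfl ih

lemma runCA (l c : List Bool) : Mach.Run .CA ![pad l, [], pad c] .ACC := by
  induction l with
  | nil => exact step3_0 rfl rfl (runCC c)
  | cons x l ih => exact step3_0 rfl rfl ih
lemma stepDx (x : Bool) : Mach.step (St.Dx x) (some x) = some St.E := by
  show (if x = x then some St.E else none) = some St.E
  rw [if_pos rfl]

lemma runB1 (x : Bool) : ∀ (bl cl : List Bool) (h : bl.length < cl.length),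
    cl[bl.length] = x → Mach.Run (.B1 x) ![[], pad bl, pad cl] .ACC := by
  intro bl
  induction bl with
  | nil =>
    intro cl h hx
    match cl, h with
    | y :: cl', _ =>
      obtain rfl : y = x := by simpa using hx
      exact step3_1 rfl rfl (step3_2 rfl (stepDx _) (runE cl'))
  | cons z bl' ih =>
    intro cl h hx
    match cl, h with
    | w :: cl', h =>
      refine step3_1 rfl rfl (step3_2 rfl rfl (ih cl' (by simpa using h) ?_))
      simpa using hx

lemma runA_le : ∀ (al bl : List Bool) (cl : List (Option Bool)) (f : St),
    al.length ≤ bl.length →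
    Mach.Run .B0 ![[], pad (bl.drop al.length), cl] f →
    Mach.Run .A0 ![pad al, pad bl, cl] f := by
  intro al
  induction al with
  | nil => intro bl cl f _ h; exact step3_0 rfl rfl (by simpa using h)
  | cons x al' ih =>
    intro bl cl f hle h
    match bl, hle with
    | y :: bl', hle =>
      exact step3_0 rfl rfl (step3_1 rfl rfl (ih bl' cl f (by simpa using hle) (by simpa using h)))

lemma runA_gt : ∀ (al bl cl : List Bool), bl.length < al.length →
    Mach.Run .A0 ![pad al, pad bl, pad cl] .ACC := by
  intro al
  induction al with
  | nil => intro bl cl h; simp at h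
  | cons x al' ih =>
    intro bl cl h
    match bl with
    | [] => exact step3_0 rfl rfl (step3_1 rfl rfl (runCA al' cl))
    | y :: bl' =>
      exact step3_0 rfl rfl (step3_1 rfl rfl (ih bl' cl (by simpa using h)))

lemma padfun (aw bw cw : List Bool) :
    (fun i => ((![aw, bw, cw] : Fin 3 → List Bool) i).map some ++ [none])
      = ![pad aw, pad bw, pad cw] := by
  funext i; fin_cases i <;> rfl

lemma acceptM_lt (aw bw cw : List Bool) (hk : aw.length < bw.length)
    (hc : bw.length - aw.length ≤ cw.length)
    (hm : cw[bw.length - 1 - aw.length]'(by omega) = bw[aw.length]) :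
    Mach.Accepts ![aw, bw, cw] := by
  refine ⟨.ACC, rfl, ?_⟩
  rw [padfun]
  refine runA_le aw bw (pad cw) .ACC hk.le ?_
  rw [List.drop_eq_getElem_cons hk]
  refine step3_1 rfl rfl (runB1 (bw[aw.length]) (bw.drop (aw.length + 1)) cw (by simp; omega) ?_)
  rw [← hm]
  congr 1
  simp
  omega

lemma acceptM_ge (aw bw cw : List Bool) (hk : bw.length ≤ aw.length) :
    Mach.Accepts ![aw, bw, cw] := by
  refine ⟨.ACC, rfl, ?_⟩
  rw [padfun]
  rcases eq_or_lt_of_le hk with h | h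
  · refine runA_le aw bw (pad cw) .ACC h.ge ?_
    rw [← h, List.drop_length]
    exact step3_1 rfl rfl (runCC cw)
  · exact runA_gt aw bw cw h
lemma run_cases {A : Type} {n : ℕ} {M : SemiSortedAA A n} {s f : M.State}
    {r : Fin n → List (Option A)} (h : M.Run s r f) :
    (s = f ∧ ∀ i, r i = []) ∨
      ∃ (c : Option A) (rest : List (Option A)) (t : M.State),
        r (M.tape s) = c :: rest ∧ M.step s c = some t ∧
          M.Run t (Function.update r (M.tape s) rest) f := by
  cases h with
  | nil => exact Or.inl ⟨rfl, fun i => rfl⟩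
  | step h hr hrun => exact Or.inr ⟨_, _, _, hr, h, hrun⟩

lemma inv3_0 {s f : St} {a b cc : List (Option Bool)} (h : Mach.Run s ![a, b, cc] f) (ht : Mach.tape s = 0) (hne : a ≠ []) :
    ∃ (c : Option Bool) (rest : List (Option Bool)) (t : St),
      a = c :: rest ∧ Mach.step s c = some t ∧ Mach.Run t ![rest, b, cc] f := by
  rcases run_cases h with ⟨_, hemp⟩ | ⟨c, rest, t, hr, hstep, hrun⟩
  · exact absurd (hemp 0) hne
  · rw [ht] at hr hrun
    rw [upd3_0] at hrun
    exact ⟨c, rest, t, hr, hstep, hrun⟩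

lemma inv3_1 {s f : St} {a b cc : List (Option Bool)} (h : Mach.Run s ![a, b, cc] f) (ht : Mach.tape s = 1) (hne : b ≠ []) :
    ∃ (c : Option Bool) (rest : List (Option Bool)) (t : St),
      b = c :: rest ∧ Mach.step s c = some t ∧ Mach.Run t ![a, rest, cc] f := by
  rcases run_cases h with ⟨_, hemp⟩ | ⟨c, rest, t, hr, hstep, hrun⟩
  · exact absurd (hemp 1) hne
  · rw [ht] at hr hrun
    rw [upd3_1] at hrun
    exact ⟨c, rest, t, hr, hstep, hrun⟩

lemma inv3_2 {s f : St} {a b cc : List (Option Bool)} (h : Mach.Run s ![a, b, cc] f) (ht : Mach.tape s = 2) (hne : cc ≠ []) :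
    ∃ (c : Option Bool) (rest : List (Option Bool)) (t : St),
      cc = c :: rest ∧ Mach.step s c = some t ∧ Mach.Run t ![a, b, rest] f := by
  rcases run_cases h with ⟨_, hemp⟩ | ⟨c, rest, t, hr, hstep, hrun⟩
  · exact absurd (hemp 2) hne
  · rw [ht] at hr hrun
    rw [upd3_2] at hrun
    exact ⟨c, rest, t, hr, hstep, hrun⟩
lemma dA0 : ∀ (al bl : List Bool) (cl : List (Option Bool)) (f : St),
    al.length ≤ bl.length →
    Mach.Run .A0 ![pad al, pad bl, cl] f →
    Mach.Run .B0 ![[], pad (bl.drop al.length), cl] f := by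
  intro al
  induction al with
  | nil =>
    intro bl cl f _ h
    obtain ⟨c, rest, t, heq, hstep, hrun⟩ := inv3_0 h rfl (by simp)
    rw [show pad ([] : List Bool) = (none : Option Bool) :: [] from rfl] at heq
    injection heq with h1 h2
    subst h1; subst h2
    obtain rfl : t = St.B0 := Option.some_injective _ hstep.symm
    simpa using hrun
  | cons x al' ih =>
    intro bl cl f hle h
    obtain ⟨c, rest, t, heq, hstep, hrun⟩ := inv3_0 h rfl (by simp)
    rw [show pad (x :: al') = some x :: pad al' from rfl] at heq
    injection heq with h1 h2
    subst h1; subst h2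
    obtain rfl : t = St.A1 := Option.some_injective _ hstep.symm
    match bl, hle with
    | y :: bl', hle =>
      obtain ⟨c2, rest2, t2, heq2, hstep2, hrun2⟩ := inv3_1 hrun rfl (by simp)
      rw [show pad (y :: bl') = some y :: pad bl' from rfl] at heq2
      injection heq2 with h1 h2
      subst h1; subst h2
      obtain rfl : t2 = St.A0 := Option.some_injective _ hstep2.symm
      simpa using ih bl' cl f (by simpa using hle) hrun2

lemma dB1 : ∀ (bl cl : List Bool) (f : St) (x : Bool) (hlen : bl.length < cl.length),
    cl[bl.length]'hlen ≠ x →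
    ¬ Mach.Run (.B1 x) ![[], pad bl, pad cl] f := by
  intro bl
  induction bl with
  | nil =>
    intro cl f x hlen hne h
    obtain ⟨c, rest, t, heq, hstep, hrun⟩ := inv3_1 h rfl (by simp)
    rw [show pad ([] : List Bool) = (none : Option Bool) :: [] from rfl] at heq
    injection heq with h1 h2
    subst h1; subst h2
    obtain rfl : t = St.Dx x := Option.some_injective _ hstep.symm
    match cl, hlen with
    | y :: cl', _ =>
      obtain ⟨c2, rest2, t2, heq2, hstep2, hrun2⟩ := inv3_2 hrun rfl (by simp)
      rw [show pad (y :: cl') = some y :: pad cl' from rfl] at heq2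
      injection heq2 with h1 h2
      subst h1; subst h2
      have hyx : y ≠ x := by simpa using hne
      rw [show Mach.step (St.Dx x) (some y) = (if y = x then some St.E else none) from rfl,
        if_neg hyx] at hstep2
      cases hstep2
  | cons z bl' ih =>
    intro cl f x hlen hne h
    obtain ⟨c, rest, t, heq, hstep, hrun⟩ := inv3_1 h rfl (by simp)
    rw [show pad (z :: bl') = some z :: pad bl' from rfl] at heq
    injection heq with h1 h2
    subst h1; subst h2
    obtain rfl : t = St.Cx x := Option.some_injective _ hstep.symm
    match cl, hlen with
    | w :: cl', hlen =>
      obtain ⟨c2, rest2, t2, heq2, hstep2, hrun2⟩ := inv3_2 hrun rfl (by simp)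
      rw [show pad (w :: cl') = some w :: pad cl' from rfl] at heq2
      injection heq2 with h1 h2
      subst h1; subst h2
      obtain rfl : t2 = St.B1 x := Option.some_injective _ hstep2.symm
      exact ih cl' f x (by simpa using hlen) (by simpa using hne) hrun2

lemma notAcceptM (aw bw cw : List Bool) (hk : aw.length < bw.length)
    (hc : bw.length - aw.length ≤ cw.length)
    (hm : cw[bw.length - 1 - aw.length]'(by omega) ≠ bw[aw.length]) :
    ¬ Mach.Accepts ![aw, bw, cw] := by
  rintro ⟨f, hf, hrun⟩
  rw [padfun] at hrun
  have h1 := dA0 aw bw (pad cw) f hk.le hrun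
  rw [List.drop_eq_getElem_cons hk] at h1
  obtain ⟨c, rest, t, heq, hstep, hrun2⟩ := inv3_1 h1 rfl (by simp)
  rw [show pad (bw[aw.length] :: bw.drop (aw.length + 1))
      = some bw[aw.length] :: pad (bw.drop (aw.length + 1)) from rfl] at heq
  injection heq with h1' h2'
  subst h1'; subst h2'
  obtain rfl : t = St.B1 (bw[aw.length]) := Option.some_injective _ hstep.symm
  refine dB1 (bw.drop (aw.length + 1)) cw f (bw[aw.length]) (by simp; omega) ?_ hrun2
  intro hcontra
  apply hm
  rw [← hcontra]
  congr 1
  simp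
  omega
namespace SemiSortedAA
variable {A : Type} {n : ℕ}

inductive RunN (M : SemiSortedAA A n) :
    ℕ → M.State → (Fin n → List (Option A)) → M.State → Prop
  | nil (s : M.State) : RunN M 0 s (fun _ => []) s
  | step {k : ℕ} {s t f : M.State} {c : Option A} {rest : List (Option A)}
      {r : Fin n → List (Option A)}
      (h : M.step s c = some t)
      (hr : r (M.tape s) = c :: rest)
      (hrun : RunN M k t (Function.update r (M.tape s) rest) f) :
      RunN M (k + 1) s r f

lemma run_to_runN {M : SemiSortedAA A n} {s f : M.State} {r : Fin n → List (Option A)}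
    (h : M.Run s r f) : ∃ k, M.RunN k s r f := by
  induction h with
  | nil s => exact ⟨0, RunN.nil s⟩
  | step h hr _ ih => obtain ⟨k, hk⟩ := ih; exact ⟨k + 1, RunN.step h hr hk⟩

lemma runN_to_run {M : SemiSortedAA A n} {k : ℕ} {s f : M.State}
    {r : Fin n → List (Option A)} (h : M.RunN k s r f) : M.Run s r f := by
  induction h with
  | nil s => exact Run.nil s
  | step h hr _ ih => exact Run.step h hr ih

lemma sum_length_update {r : Fin n → List (Option A)} {j : Fin n} {c : Option A}
    {rest : List (Option A)} (hr : r j = c :: rest) :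
    ∑ i, (r i).length = (∑ i, ((Function.update r j rest) i).length) + 1 := by
  have hA := (Finset.add_sum_erase Finset.univ (fun i => (r i).length)
    (Finset.mem_univ j)).symm
  have hB := (Finset.add_sum_erase Finset.univ
    (fun i => ((Function.update r j rest) i).length) (Finset.mem_univ j)).symm
  have hC : ∑ i ∈ Finset.univ.erase j, ((Function.update r j rest) i).length
      = ∑ i ∈ Finset.univ.erase j, (r i).length := by
    refine Finset.sum_congr rfl ?_
    intro i hi
    rw [Function.update_of_ne (Finset.ne_of_mem_erase hi)]
  rw [hA, hB, hC, Function.update_self, hr]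
  simp
  omega

lemma update_append (r q : Fin n → List (Option A)) (j : Fin n)
    (rest : List (Option A)) :
    Function.update (fun i => r i ++ q i) j (rest ++ q j)
      = fun i => Function.update r j rest i ++ q i := by
  funext i
  by_cases hi : i = j
  · subst hi; simp
  · simp [Function.update_of_ne hi]

lemma runN_length {M : SemiSortedAA A n} {k : ℕ} {s f : M.State}
    {r : Fin n → List (Option A)} (h : M.RunN k s r f) :
    ∑ i, (r i).length = k := by
  induction h with
  | nil s => simp
  | step h hr hrun ih => rw [sum_length_update hr, ih]

lemma runN_split {M : SemiSortedAA A n} :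
    ∀ (j k : ℕ) (s f : M.State) (r : Fin n → List (Option A)),
    M.RunN (j + k) s r f →
    ∃ (t : M.State) (p q : Fin n → List (Option A)),
      (∀ i, r i = p i ++ q i) ∧ M.RunN j s p t ∧ M.RunN k t q f := by
  intro j
  induction j with
  | zero =>
    intro k s f r h
    exact ⟨s, (fun _ => []), r, fun i => rfl, RunN.nil s, by simpa using h⟩
  | succ j ih =>
    intro k s f r h
    have h' : M.RunN (j + k + 1) s r f := by rwa [show j + 1 + k = j + k + 1 by omega] at h
    cases h' with
    | step hstep hr hrun =>
      rename_i t c rest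
      obtain ⟨t', p, q, hdec, h1, h2⟩ := ih k _ f _ hrun
      refine ⟨t', Function.update p (M.tape s) (c :: p (M.tape s)), q, ?_, ?_, h2⟩
      · intro i
        by_cases hi : i = M.tape s
        · subst hi
          rw [Function.update_self, hr]
          have hd := hdec (M.tape s)
          rw [Function.update_self] at hd
          rw [hd]
          rfl
        · rw [Function.update_of_ne hi]
          have hd := hdec i
          rwa [Function.update_of_ne hi] at hd
      · refine RunN.step hstep (Function.update_self _ _ _) ?_
        rw [Function.update_idem, Function.update_eq_self]
        exact h1

lemma runN_append {M : SemiSortedAA A n} {j k : ℕ} {s t f : M.State}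
    {p q : Fin n → List (Option A)} (h1 : M.RunN j s p t) (h2 : M.RunN k t q f) :
    M.RunN (j + k) s (fun i => p i ++ q i) f := by
  induction h1 with
  | nil s => simpa using h2
  | step hstep hr _ ih =>
    rw [Nat.add_right_comm]
    refine RunN.step hstep (by rw [hr, List.cons_append]) ?_
    rw [update_append]
    exact ih h2

end SemiSortedAA
lemma rev_agree (bw cw : List Bool) (hlen : cw.length = bw.length)
    (hAll : ∀ a : List Bool, Mach.Accepts ![a, bw, cw]) (k : ℕ) (hk : k < bw.length) :
    cw[bw.length - 1 - k]'(by omega) = bw[k]'hk := by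
  by_contra hne_
  refine notAcceptM (List.replicate k true) bw cw (by simpa using hk)
    (by simp only [List.length_replicate]; omega) ?_ (hAll _)
  simpa using hne_

lemma memK (w : List Bool) (a : List Bool) : Mach.Accepts ![a, w, w.reverse] := by
  rcases Nat.lt_or_ge a.length w.length with h | h
  · refine acceptM_lt a w w.reverse h (by simp <;> omega) ?_
    rw [List.getElem_reverse]
    congr 1
    omega
  · exact acceptM_ge a w w.reverse h

lemma cons2 (a : List Bool) (v : Fin 2 → List Bool) :
    Fin.cons a v = ![a, v 0, v 1] := by
  funext i
  fin_cases i <;> rfl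

lemma sq_le_two_pow : ∀ m : ℕ, 6 ≤ m → (m + 1) * (m + 1) ≤ 2 ^ m := by
  intro m
  induction m with
  | zero => intro h; exact absurd h (by omega)
  | succ m ih =>
    intro h
    rcases Nat.lt_or_ge m 6 with h6 | h6
    · have hm : m = 5 := by omega
      subst hm
      norm_num
    · have h1 := ih h6
      have h2 : 2 ^ (m + 1) = 2 * 2 ^ m := by ring
      nlinarith

lemma exists_good_n (c : ℕ) : ∃ n : ℕ, 0 < n ∧ c * (n + 1) < 2 ^ n := by
  refine ⟨max c 6, by have := le_max_right c 6; omega, ?_⟩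
  have h6 : 6 ≤ max c 6 := le_max_right _ _
  have hc : c ≤ max c 6 := le_max_left _ _
  calc c * (max c 6 + 1) < (max c 6 + 1) * (max c 6 + 1) :=
        Nat.mul_lt_mul_of_lt_of_le (by omega) (le_refl _) (by omega)
    _ ≤ 2 ^ max c 6 := sq_le_two_pow _ h6

lemma pad_take_drop (w w' : List Bool) (i : ℕ) (h : i ≤ w.length) (h' : i ≤ w'.length) :
    (w.map some ++ [none]).take i ++ (w'.map some ++ [none]).drop i
      = (w.take i ++ w'.drop i).map some ++ [none] := by
  rw [List.take_append_of_le_length (by simpa using h),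
    List.drop_append_of_le_length (by simpa using h'),
    ← List.map_take, ← List.map_drop, List.map_append, List.append_assoc]

lemma getElem_mix_left {α : Type} (l l' : List α) (i m : ℕ) (hi : i ≤ l.length)
    (hm : m < i) (hv : m < (l.take i ++ l'.drop i).length) :
    (l.take i ++ l'.drop i)[m]'hv = l[m]'(by omega) := by
  rw [List.getElem_append_left (by simp <;> omega), List.getElem_take]

lemma getElem_mix_right {α : Type} (l l' : List α) (i m : ℕ) (hi : i ≤ l.length)
    (hi' : i ≤ l'.length) (hm : i ≤ m) (hm' : m < l'.length)
    (hv : m < (l.take i ++ l'.drop i).length) :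
    (l.take i ++ l'.drop i)[m]'hv = l'[m]'hm' := by
  rw [List.getElem_append_right (by simp <;> omega), List.getElem_drop]
  congr 1
  simp
  omega

lemma getElem_dbl_left {n : ℕ} (v : Fin n → Bool) (m : ℕ) (h : m < n)
    (hv : m < (List.ofFn v ++ List.ofFn v).length) :
    (List.ofFn v ++ List.ofFn v)[m]'hv = v ⟨m, h⟩ := by
  rw [List.getElem_append_left (by simp <;> omega), List.getElem_ofFn]

lemma getElem_dbl_right {n : ℕ} (v : Fin n → Bool) (m : ℕ) (h : m < n)
    (hv : n + m < (List.ofFn v ++ List.ofFn v).length) :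
    (List.ofFn v ++ List.ofFn v)[n + m]'hv = v ⟨m, h⟩ := by
  rw [List.getElem_append_right (by simp)]
  have h2 : (List.ofFn v)[n + m - (List.ofFn v).length]'(by simp <;> omega)
      = (List.ofFn v)[m]'(by simp <;> omega) := by
    congr 1
    simp
  rw [h2, List.getElem_ofFn]

/-- Universal quantification over a coordinate does not preserve quasi-regularity:
there are a finite alphabet `A` and a quasi-regular three-variable language `L`
over `A` such that `{(b, c) : ∀ a, (a, b, c) ∈ L}` is not quasi-regular. -/
theorem quasiRegular_not_closed_under_forall :
    ∃ (A : Type) (_ : Fintype A) (L : Set (Fin 3 → List A)),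
      IsQuasiRegular L ∧
      ¬ IsQuasiRegular { v : Fin 2 → List A | ∀ a : List A, Fin.cons a v ∈ L } := by
  classical
  refine ⟨Bool, inferInstance, {w | Mach.Accepts w}, ⟨Mach, fun w => Iff.rfl⟩, ?_⟩
  rintro ⟨N, hN⟩
  letI : Fintype N.State := N.fintype
  obtain ⟨n, hn0, hn⟩ := exists_good_n (Fintype.card N.State)
  set W : (Fin n → Bool) → List Bool := fun v => List.ofFn v ++ List.ofFn v with hWdef
  have hWlen : ∀ v, (W v).length = 2 * n := by
    intro v
    simp [hWdef]
    omega
  have hmem : ∀ v : Fin n → Bool, N.Accepts ![W v, (W v).reverse] := by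
    intro v
    refine (hN _).1 ?_
    intro a
    have hc := cons2 a ![W v, (W v).reverse]
    rw [Set.mem_setOf_eq, hc]
    simpa using memK (W v) a
  have key : ∀ v : Fin n → Bool, ∃ (t : N.State) (p q : Fin 2 → List (Option Bool))
      (f : N.State),
      f ∈ N.accept ∧
      (∀ j, ((![W v, (W v).reverse] : Fin 2 → List Bool) j).map some ++ [none]
          = p j ++ q j) ∧
      N.RunN n N.start p t ∧ N.RunN (3 * n + 2) t q f ∧
      (p 0).length + (p 1).length = n := by
    intro v
    obtain ⟨f, hf, hrun⟩ := hmem v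
    obtain ⟨T, hrunN⟩ := SemiSortedAA.run_to_runN hrun
    have hT : T = n + (3 * n + 2) := by
      have hlen := SemiSortedAA.runN_length hrunN
      rw [Fin.sum_univ_two] at hlen
      simp [hWlen v] at hlen
      omega
    rw [hT] at hrunN
    obtain ⟨t, p, q, hdec, hr1, hr2⟩ := SemiSortedAA.runN_split n (3 * n + 2) _ _ _ hrunN
    have hs := SemiSortedAA.runN_length hr1
    rw [Fin.sum_univ_two] at hs
    exact ⟨t, p, q, f, hf, fun j => (hdec j), hr1, hr2, hs⟩
  choose t p q f hacc hdec h1 h2 hsum using key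
  have hcard : Fintype.card (N.State × Fin (n + 1)) < Fintype.card (Fin n → Bool) := by
    simpa using hn
  obtain ⟨v, v', hne, hfeq⟩ := Fintype.exists_ne_map_eq_of_card_lt
    (fun v => ((t v, ⟨(p v 0).length, by have := hsum v; omega⟩) : N.State × Fin (n + 1)))
    hcard
  have ht : t v = t v' := congrArg Prod.fst hfeq
  have hi : (p v 0).length = (p v' 0).length := by
    have := congrArg (fun x => (x.snd : ℕ)) hfeq
    simpa using this
  set i := (p v 0).length with hidef
  have hin : i ≤ n := by have := hsum v; omega
  have hl1 : (p v 1).length = n - i := by have := hsum v; omega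
  have hl1' : (p v' 1).length = n - i := by have := hsum v'; omega
  -- p and q as take/drop
  have hp : ∀ (u : Fin n → Bool) (j : Fin 2),
      p u j = (((![W u, (W u).reverse] : Fin 2 → List Bool) j).map some ++ [none]).take
        ((p u j).length) := by
    intro u j
    rw [hdec u j, List.take_left]
  have hq : ∀ (u : Fin n → Bool) (j : Fin 2),
      q u j = (((![W u, (W u).reverse] : Fin 2 → List Bool) j).map some ++ [none]).drop
        ((p u j).length) := by
    intro u j
    rw [hdec u j, List.drop_left]
  set bz : List Bool := (W v).take i ++ (W v').drop i with hbzdef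
  set cz : List Bool := ((W v).reverse).take (n - i) ++ ((W v').reverse).drop (n - i)
    with hczdef
  have hpad0 : p v 0 ++ q v' 0 = bz.map some ++ [none] := by
    rw [hp v 0, hq v' 0, ← hi, ← hidef, hbzdef]
    have := pad_take_drop (W v) (W v') i (by rw [hWlen] <;> omega) (by rw [hWlen] <;> omega)
    simpa using this
  have hpad1 : p v 1 ++ q v' 1 = cz.map some ++ [none] := by
    rw [hp v 1, hq v' 1, hl1, hl1', hczdef]
    have := pad_take_drop ((W v).reverse) ((W v').reverse) (n - i)
      (by simp [hWlen] <;> omega) (by simp [hWlen] <;> omega)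
    simpa using this
  have hcomp : N.RunN (n + (3 * n + 2)) N.start (fun j => p v j ++ q v' j) (f v') := by
    refine SemiSortedAA.runN_append (h1 v) ?_
    rw [ht]
    exact h2 v'
  have haccZ : N.Accepts ![bz, cz] := by
    refine ⟨f v', hacc v', ?_⟩
    have hrun := SemiSortedAA.runN_to_run hcomp
    rw [show (fun j => ((![bz, cz] : Fin 2 → List Bool) j).map some ++ [none])
        = (fun j => p v j ++ q v' j) from ?_]
    · exact hrun
    · funext j
      fin_cases j
      · simpa using hpad0.symm
      · simpa using hpad1.symm
  have hZK := (hN _).2 haccZ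
  have hall : ∀ a, Mach.Accepts ![a, bz, cz] := by
    intro a
    have hmem2 := hZK a
    rw [Set.mem_setOf_eq, cons2 a ![bz, cz]] at hmem2
    simpa using hmem2
  have hbl : bz.length = 2 * n := by
    rw [hbzdef]
    simp [hWlen]
    omega
  have hcl : cz.length = 2 * n := by
    rw [hczdef]
    simp [hWlen]
    omega
  have hEq := rev_agree bz cz (by omega) hall
  obtain ⟨j0, hj0⟩ := Function.ne_iff.mp hne
  have hj0n : (j0 : ℕ) < n := j0.isLt
  apply hj0
  rcases Nat.lt_or_ge (j0 : ℕ) i with hcase | hcase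
  · -- j0 < i
    have hk : (j0 : ℕ) < bz.length := by omega
    have heq := hEq (j0 : ℕ) hk
    -- RHS : bz[j0] = v j0
    have hR : bz[(j0 : ℕ)]'hk = v j0 := by
      show ((W v).take i ++ (W v').drop i)[(j0 : ℕ)]'(by simp [hWlen] <;> omega) = v j0
      rw [getElem_mix_left (W v) (W v') i (j0 : ℕ) (by rw [hWlen] <;> omega) hcase]
      show (List.ofFn v ++ List.ofFn v)[(j0 : ℕ)]'(by simp <;> omega) = v j0
      rw [getElem_dbl_left v (j0 : ℕ) hj0n]
    -- LHS : cz[2n-1-j0] = v' j0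
    have hL : cz[bz.length - 1 - (j0 : ℕ)]'(by omega) = v' j0 := by
      show (((W v).reverse).take (n - i) ++ ((W v').reverse).drop (n - i))[bz.length - 1 - (j0 : ℕ)]'(by simp [hWlen] <;> omega) = v' j0
      rw [getElem_mix_right ((W v).reverse) ((W v').reverse) (n - i)
        (bz.length - 1 - (j0 : ℕ)) (by simp [hWlen] <;> omega) (by simp [hWlen] <;> omega)
        (by omega) (by simp [hWlen] <;> omega)]
      rw [List.getElem_reverse]
      have h4 : (W v')[(W v').length - 1 - (bz.length - 1 - (j0 : ℕ))]'(by rw [hWlen] <;> omega)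
          = (W v')[(j0 : ℕ)]'(by rw [hWlen] <;> omega) := by
        congr 1
        rw [hWlen, hbl]
        omega
      rw [h4]
      show (List.ofFn v' ++ List.ofFn v')[(j0 : ℕ)]'(by simp <;> omega) = v' j0
      rw [getElem_dbl_left v' (j0 : ℕ) hj0n]
    rw [hL, hR] at heq
    exact heq.symm
  · -- i ≤ j0
    have hk : n + (j0 : ℕ) < bz.length := by omega
    have heq := hEq (n + (j0 : ℕ)) hk
    -- RHS : bz[n + j0] = v' j0
    have hR : bz[n + (j0 : ℕ)]'hk = v' j0 := by
      show ((W v).take i ++ (W v').drop i)[n + (j0 : ℕ)]'(by simp [hWlen] <;> omega) = v' j0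
      rw [getElem_mix_right (W v) (W v') i (n + (j0 : ℕ)) (by rw [hWlen] <;> omega)
        (by rw [hWlen] <;> omega) (by omega) (by rw [hWlen] <;> omega)]
      show (List.ofFn v' ++ List.ofFn v')[n + (j0 : ℕ)]'(by simp <;> omega) = v' j0
      rw [getElem_dbl_right v' (j0 : ℕ) hj0n]
    -- LHS : cz[2n-1-(n+j0)] = v j0
    have hL : cz[bz.length - 1 - (n + (j0 : ℕ))]'(by omega) = v j0 := by
      show (((W v).reverse).take (n - i) ++ ((W v').reverse).drop (n - i))[bz.length - 1 - (n + (j0 : ℕ))]'(by simp [hWlen] <;> omega) = v j0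
      rw [getElem_mix_left ((W v).reverse) ((W v').reverse) (n - i)
        (bz.length - 1 - (n + (j0 : ℕ))) (by simp [hWlen] <;> omega) (by omega)]
      rw [List.getElem_reverse]
      have h4 : (W v)[(W v).length - 1 - (bz.length - 1 - (n + (j0 : ℕ)))]'(by rw [hWlen] <;> omega)
          = (W v)[n + (j0 : ℕ)]'(by rw [hWlen] <;> omega) := by
        congr 1
        rw [hWlen, hbl]
        omega
      rw [h4]
      show (List.ofFn v ++ List.ofFn v)[n + (j0 : ℕ)]'(by simp <;> omega) = v j0
      rw [getElem_dbl_right v (j0 : ℕ) hj0n]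
    rw [hL, hR] at heq
    exact heq
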